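/- Let |X| ≥ 3 and let 𝒟 contain all frames of size at most 2. A probabilistic choice rule ρ on 𝒟 with strictly positive probabilities has an F-Luce representation if and only if ρ satisfies Strong Luce-IIA (for x, y ∉ F Δ F', ρ(x,F)/ρ(x,F') = ρ(y,F)/ρ(y,F')) and F-Regularity (for x ∉ F, ρ(x,F) ≤ ρ(x, F\{y}) for the frames in 𝒟). -/

import Mathlib

open Finset

/-- Characterization of F-Luce on the domain of frames of size at most 2,
for at least three alternatives: an F-Luce representation exists iff the data
satisfy Strong Luce-IIA and F-Regularity. -/
theorem fLuce_characterization {X : Type*} [Fintype X] [DecidableEq X]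
    (hX : 3 ≤ Fintype.card X)
    (ρ : X → Finset X → ℝ)
    (hpos : ∀ (x : X) (F : Finset X), F.card ≤ 2 → 0 < ρ x F)
    (hsum : ∀ F : Finset X, F.card ≤ 2 → ∑ x, ρ x F = 1) :
    (∃ u v : X → ℝ, (∀ x, 0 < u x) ∧ (∀ x, 0 ≤ v x) ∧
        ∀ (F : Finset X), F.card ≤ 2 → ∀ x : X,
          ρ x F = (u x + if x ∈ F then v x else 0) / ((∑ z, u z) + ∑ z ∈ F, v z)) ↔
      ((∀ (F F' : Finset X), F.card ≤ 2 → F'.card ≤ 2 → ∀ x y : X,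
          x ∉ symmDiff F F' → y ∉ symmDiff F F' →
          ρ x F / ρ x F' = ρ y F / ρ y F') ∧
        (∀ (F : Finset X), F.card ≤ 2 → ∀ x y : X, x ∉ F →
          ρ x F ≤ ρ x (F.erase y))) := by
  constructor
  · rintro ⟨u, v, hu, hv, hrep⟩
    have : Nonempty X := Fintype.card_pos_iff.mp (by omega)
    have huniv : (univ : Finset X).Nonempty := univ_nonempty
    have hU : 0 < ∑ z, u z := Finset.sum_pos (fun z _ => hu z) huniv
    have hD : ∀ F : Finset X, 0 < (∑ z, u z) + ∑ z ∈ F, v z := fun F =>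
      add_pos_of_pos_of_nonneg hU (Finset.sum_nonneg fun z _ => hv z)
    constructor
    · intro F F' hF hF' x y hx hy
      have key : ∀ w : X, w ∉ symmDiff F F' →
          ρ w F / ρ w F' = ((∑ z, u z) + ∑ z ∈ F', v z) / ((∑ z, u z) + ∑ z ∈ F, v z) := by
        intro w hw
        have he : (if w ∈ F then v w else 0) = (if w ∈ F' then v w else 0) := by
          simp only [Finset.mem_symmDiff] at hw
          by_cases h : w ∈ F <;> by_cases h' : w ∈ F' <;> simp [h, h'] <;> tauto
        have hn : 0 < u w + (if w ∈ F' then v w else 0) := by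
          have : (0:ℝ) ≤ if w ∈ F' then v w else 0 := by
            split_ifs; exacts [hv w, le_refl 0]
          linarith [hu w]
        rw [hrep F hF w, hrep F' hF' w, he, div_div_div_comm, div_self hn.ne', one_div, inv_div]
      rw [key x hx, key y hy]
    · intro F hF x y hx
      have hF' : (F.erase y).card ≤ 2 := le_trans (Finset.card_le_card (Finset.erase_subset _ _)) hF
      have hx' : x ∉ F.erase y := fun h => hx (Finset.erase_subset _ _ h)
      rw [hrep F hF x, hrep (F.erase y) hF' x, if_neg hx, if_neg hx']
      simp only [add_zero]
      apply div_le_div_of_nonneg_left (hu x).le (hD _)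
      have : ∑ z ∈ F.erase y, v z ≤ ∑ z ∈ F, v z :=
        Finset.sum_le_sum_of_subset_of_nonneg (Finset.erase_subset _ _) (fun z _ _ => hv z)
      linarith
  · rintro ⟨hIIA, hreg⟩
    have c0 : (∅ : Finset X).card ≤ 2 := by simp
    have c1 : ∀ a : X, ({a} : Finset X).card ≤ 2 := by simp
    have c2 : ∀ a b : X, ({a, b} : Finset X).card ≤ 2 := fun a b =>
      le_trans (Finset.card_insert_le _ _) (by simp)
    set u : X → ℝ := fun x => ρ x ∅ with hu_def
    set s : X → ℝ := fun a => 1 - ρ a {a} with hs_def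
    set t : X → ℝ := fun a => 1 - ρ a ∅ with ht_def
    have hsU : ∑ z, u z = 1 := hsum ∅ c0
    -- erase-sum identities
    have hserase : ∀ a : X, s a = ∑ y ∈ univ.erase a, ρ y {a} := by
      intro a
      have := Finset.add_sum_erase univ (fun y => ρ y ({a} : Finset X)) (mem_univ a)
      have h1 := hsum {a} (c1 a)
      simp only [hs_def]
      linarith
    have hterase : ∀ a : X, t a = ∑ y ∈ univ.erase a, ρ y ∅ := by
      intro a
      have := Finset.add_sum_erase univ (fun y => ρ y (∅ : Finset X)) (mem_univ a)
      have h1 := hsum ∅ c0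
      simp only [ht_def]
      linarith
    have herasene : ∀ a : X, (univ.erase a).Nonempty := by
      intro a
      rw [← Finset.card_pos, Finset.card_erase_of_mem (mem_univ a)]
      have := Finset.card_univ (α := X)
      omega
    have hspos : ∀ a : X, 0 < s a := fun a => by
      rw [hserase a]; exact Finset.sum_pos (fun y _ => hpos y {a} (c1 a)) (herasene a)
    have hst : ∀ a : X, s a ≤ t a := by
      intro a
      rw [hserase a, hterase a]
      apply Finset.sum_le_sum
      intro y hy
      have hne : y ≠ a := Finset.ne_of_mem_erase hy
      have := hreg {a} (c1 a) y a (by simp [hne])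
      rwa [Finset.erase_singleton] at this
    have htpos : ∀ a : X, 0 < t a := fun a => lt_of_lt_of_le (hspos a) (hst a)
    have h1s : ∀ a : X, 0 < 1 - s a := fun a => by
      have := hpos a {a} (c1 a); simp only [hs_def]; linarith
    -- singleton ratio lemma
    have hsing : ∀ a y : X, y ≠ a → ρ y {a} * t a = ρ y ∅ * s a := by
      intro a y hy
      have hr : ∀ z : X, z ≠ a → ρ y {a} * ρ z ∅ = ρ z {a} * ρ y ∅ := by
        intro z hz
        have hmem : ∀ w : X, w ≠ a → w ∉ symmDiff ({a} : Finset X) ∅ := by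
          intro w hw; simp [Finset.mem_symmDiff, hw]
        have := hIIA {a} ∅ (c1 a) c0 y z (hmem y hy) (hmem z hz)
        have h1 := hpos y ∅ c0
        have h2 := hpos z ∅ c0
        field_simp at this
        linarith
      rw [hterase a, hserase a, Finset.mul_sum, Finset.mul_sum]
      refine Finset.sum_congr rfl fun z hz => ?_
      linear_combination hr z (Finset.ne_of_mem_erase hz)
    refine ⟨u, fun a => (t a - s a) / s a, fun x => hpos x ∅ c0,
      fun a => div_nonneg (by linarith [hst a]) (hspos a).le, ?_⟩
    intro F hF x
    rw [hsU]
    -- case on the size of F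
    rcases Nat.lt_or_ge F.card 1 with h | h
    · -- F = ∅
      have hF0 : F.card = 0 := by omega
      have : F = ∅ := Finset.card_eq_zero.mp hF0
      subst this
      simp only [Finset.notMem_empty, if_false, Finset.sum_empty, add_zero]
      have := hpos x ∅ c0
      field_simp
      rfl
    rcases Nat.lt_or_ge F.card 2 with h2 | h2
    · -- F = {a}
      have hF1 : F.card = 1 := by omega
      obtain ⟨a, rfl⟩ := Finset.card_eq_one.mp hF1
      simp only [Finset.mem_singleton, Finset.sum_singleton]
      by_cases hxa : x = a
      · subst hxa
        rw [if_pos rfl]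
        have hsa := hspos x
        have hta := htpos x
        have h1 : ρ x {x} = 1 - s x := by simp only [hs_def]; ring
        rw [h1]
        have hux : u x = 1 - t x := by simp only [hu_def, ht_def]; ring
        rw [hux]
        have hne : (1 : ℝ) + (t x - s x) / s x ≠ 0 :=
          (by have := div_nonneg (sub_nonneg.2 (hst x)) hsa.le; linarith : (0:ℝ) < 1 + (t x - s x) / s x).ne'
        rw [eq_div_iff hne]
        linear_combination -(div_mul_cancel₀ (t x - s x) hsa.ne')
      · rw [if_neg hxa]
        have hk := hsing a x hxa
        have hsa := hspos a
        have hta := htpos a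
        rw [add_zero]
        have hne : (1 : ℝ) + (t a - s a) / s a ≠ 0 :=
          (by have := div_nonneg (sub_nonneg.2 (hst a)) hsa.le; linarith : (0:ℝ) < 1 + (t a - s a) / s a).ne'
        have hux : u x = ρ x ∅ := rfl
        rw [hux, eq_div_iff hne]
        apply mul_right_cancel₀ hsa.ne'
        linear_combination hk + ρ x {a} * (div_mul_cancel₀ (t a - s a) hsa.ne')
    · -- F is a pair
      have h2' : F.card = 2 := le_antisymm hF h2
      obtain ⟨a, b, hab, rfl⟩ := Finset.card_eq_two.mp h2'
      obtain ⟨w, hwa, hwb⟩ : ∃ w : X, w ≠ a ∧ w ≠ b := by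
        by_contra hcon
        push_neg at hcon
        have : (univ : Finset X) ⊆ {a, b} := by
          intro z _
          by_cases hz : z = a
          · simp [hz]
          · simp [hcon z hz]
        have := Finset.card_le_card this
        simp [Finset.card_univ] at this
        have := c2 a b
        omega
      have hsa := hspos a; have hsb := hspos b
      have hta := htpos a; have htb := htpos b
      have h1sa := h1s a; have h1sb := h1s b
      have hA : ρ a {a} = 1 - s a := by simp only [hs_def]; ring
      have hB : ρ b {b} = 1 - s b := by simp only [hs_def]; ring
      have hmem1 : ∀ y : X, y ≠ b → y ∉ symmDiff ({a, b} : Finset X) {a} := by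
        intro y hy
        simp only [Finset.mem_symmDiff, Finset.mem_insert, Finset.mem_singleton]
        tauto
      have hmem2 : ∀ y : X, y ≠ a → y ∉ symmDiff ({a, b} : Finset X) {b} := by
        intro y hy
        simp only [Finset.mem_symmDiff, Finset.mem_insert, Finset.mem_singleton]
        tauto
      have hR1 : ∀ y : X, y ≠ b → ρ y {a, b} * ρ a {a} = ρ a {a, b} * ρ y {a} := by
        intro y hy
        have h := hIIA {a, b} {a} (c2 a b) (c1 a) y a (hmem1 y hy) (hmem1 a hab)
        have h1 := hpos y {a} (c1 a)
        have h2 := hpos a {a} (c1 a)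
        rw [div_eq_div_iff h1.ne' h2.ne'] at h
        linarith
      have hR2 : ∀ y : X, y ≠ a → ρ y {a, b} * ρ b {b} = ρ b {a, b} * ρ y {b} := by
        intro y hy
        have h := hIIA {a, b} {b} (c2 a b) (c1 b) y b (hmem2 y hy) (hmem2 b (Ne.symm hab))
        have h1 := hpos y {b} (c1 b)
        have h2 := hpos b {b} (c1 b)
        rw [div_eq_div_iff h1.ne' h2.ne'] at h
        linarith
      -- sum identities
      have hSA : ∑ y ∈ univ.erase b, ρ y {a} = 1 - ρ b {a} := by
        have := Finset.add_sum_erase univ (fun y => ρ y ({a} : Finset X)) (mem_univ b)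
        have h1 := hsum {a} (c1 a)
        linarith
      have hSAB : ∑ y ∈ univ.erase b, ρ y {a, b} = 1 - ρ b {a, b} := by
        have := Finset.add_sum_erase univ (fun y => ρ y ({a, b} : Finset X)) (mem_univ b)
        have h1 := hsum {a, b} (c2 a b)
        linarith
      have hSum1 : (1 - ρ b {a, b}) * (1 - s a) = ρ a {a, b} * (1 - ρ b {a}) := by
        rw [← hA, ← hSAB, ← hSA, Finset.sum_mul, Finset.mul_sum]
        exact Finset.sum_congr rfl fun y hy => hR1 y (Finset.ne_of_mem_erase hy)
      -- singleton relations
      have h4 : ρ w {a} * t a = ρ w ∅ * s a := hsing a w hwa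
      have h5 : ρ w {b} * t b = ρ w ∅ * s b := hsing b w hwb
      have h6 : ρ b {a} * t a = ρ b ∅ * s a := hsing a b (Ne.symm hab)
      have hub : ρ b ∅ = 1 - t b := by simp only [ht_def]; ring
      have h1w : ρ w {a, b} * (1 - s a) = ρ a {a, b} * ρ w {a} := by
        rw [← hA]; exact hR1 w hwb
      have h2w : ρ w {a, b} * (1 - s b) = ρ b {a, b} * ρ w {b} := by
        rw [← hB]; exact hR2 w hwa
      have step1 : ρ a {a, b} * (ρ w {a} * (1 - s b)) = ρ b {a, b} * (ρ w {b} * (1 - s a)) := by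
        linear_combination (1 - s a) * h2w - (1 - s b) * h1w
      have step2 : ρ w ∅ * (ρ a {a, b} * (s a * t b * (1 - s b)))
          = ρ w ∅ * (ρ b {a, b} * (s b * t a * (1 - s a))) := by
        linear_combination (t a * t b) * step1 - (ρ a {a, b} * t b * (1 - s b)) * h4
          + (ρ b {a, b} * t a * (1 - s a)) * h5
      have hE1 : ρ a {a, b} * (s a * t b * (1 - s b)) = ρ b {a, b} * (s b * t a * (1 - s a)) :=
        mul_left_cancel₀ (hpos w ∅ c0).ne' step2
      have hE2 : (1 - ρ b {a, b}) * (1 - s a) * t a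
          = ρ a {a, b} * (t a - (1 - t b) * s a) := by
        linear_combination t a * hSum1 - ρ a {a, b} * h6 - (ρ a {a, b} * s a) * hub
      have hP : ρ a {a, b} * (s a * t b + s b * t a - s a * s b) = t a * (1 - s a) * s b := by
        linear_combination hE1 - s b * hE2
      have step3 : (s b * t a * (1 - s a)) * (ρ b {a, b} * (s a * t b + s b * t a - s a * s b))
          = (s b * t a * (1 - s a)) * (t b * (1 - s b) * s a) := by
        linear_combination (-(s a * t b + s b * t a - s a * s b)) * hE1
          + (s a * t b * (1 - s b)) * hP
      have hQ : ρ b {a, b} * (s a * t b + s b * t a - s a * s b) = t b * (1 - s b) * s a :=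
        mul_left_cancel₀ (by positivity : (0:ℝ) < s b * t a * (1 - s a)).ne' step3
      -- finish
      rw [Finset.sum_pair hab]
      have hva : (t a - s a) / s a * s a = t a - s a := div_mul_cancel₀ _ hsa.ne'
      have hvb : (t b - s b) / s b * s b = t b - s b := div_mul_cancel₀ _ hsb.ne'
      have hva0 : 0 ≤ (t a - s a) / s a := div_nonneg (by linarith [hst a]) hsa.le
      have hvb0 : 0 ≤ (t b - s b) / s b := div_nonneg (by linarith [hst b]) hsb.le
      have hDne : (1 + ((t a - s a) / s a + (t b - s b) / s b)) ≠ 0 := by positivity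
      by_cases hxa : x = a
      · subst hxa
        rw [if_pos (by simp)]
        have hua : u x = 1 - t x := by simp only [hu_def, ht_def]; ring
        rw [hua, eq_div_iff hDne]
        apply mul_left_cancel₀ (mul_pos hsa hsb).ne'
        linear_combination hP + (ρ x {x, b} * s b - s b) * hva + (ρ x {x, b} * s x) * hvb
      · by_cases hxb : x = b
        · subst hxb
          rw [if_pos (by simp)]
          have hub' : u x = 1 - t x := by simp only [hu_def, ht_def]; ring
          rw [hub', eq_div_iff hDne]
          apply mul_left_cancel₀ (mul_pos hsa hsb).ne'
          linear_combination hQ + (ρ x {a, x} * s x) * hva + (ρ x {a, x} * s a - s a) * hvb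
        · rw [if_neg (by simp [hxa, hxb])]
          have hR1x : ρ x {a, b} * (1 - s a) = ρ a {a, b} * ρ x {a} := by
            rw [← hA]; exact hR1 x hxb
          have hx4 : ρ x {a} * t a = ρ x ∅ * s a := hsing a x hxa
          have hxfin : ((1 - s a) * t a) * (ρ x {a, b} * (s a * t b + s b * t a - s a * s b))
              = ((1 - s a) * t a) * (ρ x ∅ * (s a * s b)) := by
            linear_combination (t a * (s a * t b + s b * t a - s a * s b)) * hR1x
              + (ρ a {a, b} * (s a * t b + s b * t a - s a * s b)) * hx4
              + (ρ x ∅ * s a) * hP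
          have hxC : ρ x {a, b} * (s a * t b + s b * t a - s a * s b) = ρ x ∅ * (s a * s b) :=
            mul_left_cancel₀ (by positivity : (0:ℝ) < (1 - s a) * t a).ne' hxfin
          have hux : u x = ρ x ∅ := rfl
          rw [hux, add_zero, eq_div_iff hDne]
          apply mul_left_cancel₀ (mul_pos hsa hsb).ne'
          linear_combination hxC + (ρ x {a, b} * s b) * hva + (ρ x {a, b} * s a) * hvb
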